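/- Let R be a Noetherian local ring and J ⊆ I ideals of R. If there exists a generating set f₁,…,f_t of J such that each fᵢ ∈ I \ I², and the initial forms f₁*,…,f_t* generate the ideal J* of initial forms of J in gr_I(R), then J ∩ Iⁿ = J·Iⁿ⁻¹ for all n ≥ 1. -/

import Mathlib

/-- Valabrega–Valla criterion: in a Noetherian local ring, if `J` admits a generating
set `f₁,…,f_t` with each `fᵢ ∈ I \ I²` whose initial forms generate the ideal `J*` of
initial forms in `gr_I(R)` (concretely: `J ∩ Iⁿ ⊆ J·Iⁿ⁻¹ + Iⁿ⁺¹` for all `n ≥ 1`),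
then `J ∩ Iⁿ = J·Iⁿ⁻¹` for all `n ≥ 1`. -/
theorem aluffi_torsion_free_of_standard_base {R : Type*} [CommRing R] [IsNoetherianRing R]
    [IsLocalRing R] (J I : Ideal R) (hJI : J ≤ I)
    (hgen : ∃ (t : ℕ) (f : Fin t → R), J = Ideal.span (Set.range f) ∧
      ∀ i, f i ∈ I ∧ f i ∉ I ^ 2)
    (hstd : ∀ n : ℕ, 1 ≤ n → J ⊓ I ^ n ≤ J * I ^ (n - 1) + I ^ (n + 1)) :
    ∀ n : ℕ, 1 ≤ n → J ⊓ I ^ n = J * I ^ (n - 1) := by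
  intro n hn
  -- the easy inclusion
  have hsup : J * I ^ (n - 1) ≤ J ⊓ I ^ n := by
    refine le_inf Ideal.mul_le_left ?_
    calc J * I ^ (n - 1) ≤ I * I ^ (n - 1) := Ideal.mul_mono_left hJI
    _ = I ^ (n - 1 + 1) := (pow_succ' I (n - 1)).symm
    _ = I ^ n := by rw [Nat.sub_add_cancel hn]
  refine le_antisymm ?_ hsup
  by_cases hI : I = ⊤
  · -- then there can be no generators, so J = ⊥
    obtain ⟨t, f, hJ, hf⟩ := hgen
    have ht : t = 0 := by
      by_contra h
      exact (hf ⟨0, Nat.pos_of_ne_zero h⟩).2 (by rw [hI]; simp [Ideal.top_pow])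
    subst ht
    have : J = ⊥ := by
      rw [hJ]
      simp [Set.range_eq_empty]
    simp [this]
  -- key: J ⊓ Iⁿ ⊆ J·Iⁿ⁻¹ + Iᵐ⁺ⁿ for all m
  · have key : ∀ m : ℕ, J ⊓ I ^ n ≤ J * I ^ (n - 1) + I ^ (m + n) := by
      intro m
      induction m with
      | zero => exact le_trans inf_le_right (by simp)
      | succ m ih =>
        intro x hx
        obtain ⟨y, hy, z, hz, hyz⟩ := Submodule.mem_sup.mp (ih hx)
        have hzJ : z ∈ J := by
          have hxJ : x ∈ J := hx.1
          have hyJ : y ∈ J := Ideal.mul_le_left hy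
          have : z = x - y := by rw [← hyz]; ring
          rw [this]; exact J.sub_mem hxJ hyJ
        have hz' : z ∈ J * I ^ (m + n - 1) + I ^ (m + n + 1) :=
          hstd (m + n) (le_trans hn (Nat.le_add_left n m)) ⟨hzJ, hz⟩
        have h1 : J * I ^ (m + n - 1) ≤ J * I ^ (n - 1) :=
          Ideal.mul_mono_right (Ideal.pow_le_pow_right (by omega))
        have hz'' : z ∈ J * I ^ (n - 1) + I ^ (m + 1 + n) := by
          have : m + n + 1 = m + 1 + n := by omega
          rw [← this]
          rw [Submodule.add_eq_sup] at hz' ⊢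
          exact sup_le_sup h1 le_rfl hz'
        rw [← hyz]
        exact Submodule.add_mem _ (Submodule.mem_sup_left hy) hz''
    -- Krull intersection in quotient by J·Iⁿ⁻¹
    intro x hx
    set K := J * I ^ (n - 1) with hK
    have hKtop : K ≠ ⊤ := fun h => hI (top_le_iff.mp (h ▸ (hsup.trans inf_le_left).trans hJI))
    haveI : Nontrivial (R ⧸ K) := Ideal.Quotient.nontrivial_iff.mpr hKtop
    haveI : IsLocalRing (R ⧸ K) :=
      IsLocalRing.of_surjective' (Ideal.Quotient.mk K) Ideal.Quotient.mk_surjective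
    have hItop : Ideal.map (Ideal.Quotient.mk K) I ≠ ⊤ := by
      intro h
      have : K ⊔ I = ⊤ := by
        have := congrArg (Ideal.comap (Ideal.Quotient.mk K)) h
        rwa [Ideal.comap_map_of_surjective _ Ideal.Quotient.mk_surjective,
          ← RingHom.ker_eq_comap_bot, Ideal.mk_ker, Ideal.comap_top, sup_comm] at this
      exact hI (top_le_iff.mp (this ▸ sup_le ((hsup.trans inf_le_left).trans hJI) le_rfl))
    have hbot := Ideal.iInf_pow_eq_bot_of_isLocalRing (Ideal.map (Ideal.Quotient.mk K) I) hItop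
    have hxmem : Ideal.Quotient.mk K x ∈ (⊥ : Ideal (R ⧸ K)) := by
      rw [← hbot]
      refine Ideal.mem_iInf.mpr fun m => ?_
      rw [← Ideal.map_pow]
      have : x ∈ K + I ^ (m + n) := key m hx
      obtain ⟨y, hy, z, hz, hyz⟩ := Submodule.mem_sup.mp this
      have : Ideal.Quotient.mk K x = Ideal.Quotient.mk K z := by
        rw [← hyz]
        simp [Ideal.Quotient.eq_zero_iff_mem.mpr hy]
      rw [this]
      have : I ^ m ≥ I ^ (m + n) := Ideal.pow_le_pow_right (by omega)
      exact Ideal.mem_map_of_mem _ (this hz)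
    rwa [Submodule.mem_bot, Ideal.Quotient.eq_zero_iff_mem] at hxmem
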